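/- Let G=(V,E) with terminal pairs and partial solution X ⊆ E; assign capacity (p+1)/p to edges of X and 1 to all other edges, and assume every terminal-separating cut of G has at least p edges. Then a terminal-separating cut C satisfies (|C| = p and C ⊄ X) if and only if its capacity is strictly less than p+1; and a cut C satisfies (|C| > p or C ⊆ X) if and only if its capacity is at least p+1. -/
import Mathlib


/-- A finite undirected multigraph: each edge `e` has two (not necessarily distinct)
endpoints `fst e` and `snd e`. -/
structure MGraph (V E : Type*) where
  fst : E → V
  snd : E → V

namespace MGraph

variable {V E : Type*}

/-- `cut G S` is `δ(S)`, the set of edges with exactly one endpoint in `S`. -/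
def cut (G : MGraph V E) (S : Set V) : Set E :=
  {e | (G.fst e ∈ S) ↔ (G.snd e ∉ S)}

/-- One step along an edge of `A`. -/
def Step (G : MGraph V E) (A : Set E) (u v : V) : Prop :=
  ∃ e ∈ A, (G.fst e = u ∧ G.snd e = v) ∨ (G.fst e = v ∧ G.snd e = u)

/-- `u` and `v` are connected using only edges from `A`. -/
def Reach (G : MGraph V E) (A : Set E) (u v : V) : Prop :=
  Relation.ReflTransGen (G.Step A) u v

/-- The spanning subgraph `(V, A)` is connected. -/
def ConnectedOn (G : MGraph V E) (A : Set E) : Prop :=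
  ∀ u v : V, G.Reach A u v

/-- The subgraph induced on the vertex set `W`, using only edges of `A` with both
endpoints in `W`, is connected. -/
def InducedConnected (G : MGraph V E) (A : Set E) (W : Set V) : Prop :=
  ∀ u ∈ W, ∀ v ∈ W, G.Reach {e | e ∈ A ∧ G.fst e ∈ W ∧ G.snd e ∈ W} u v

/-- `s` and `t` are `p`-edge-connected in the spanning subgraph `(V, A)`:
every edge cut separating them has at least `p` edges. -/
def EdgeConnected (G : MGraph V E) (A : Set E) (p : ℕ) (s t : V) : Prop :=
  ∀ S : Set V, s ∈ S → t ∉ S → p ≤ (G.cut S ∩ A).ncard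

/-- `S` separates the terminal pair `st`: exactly one of the two terminals lies in `S`. -/
def Separates (S : Set V) (st : V × V) : Prop := (st.1 ∈ S) ↔ (st.2 ∉ S)

/-- `G` is 2-edge-connected: connected, and still connected after removing any single edge. -/
def TwoEdgeConnected (G : MGraph V E) : Prop :=
  G.ConnectedOn Set.univ ∧ ∀ e : E, G.ConnectedOn {e}ᶜ

/-- `G` is 3-edge-connected: connected, and still connected after removing any two edges. -/
def ThreeEdgeConnected (G : MGraph V E) : Prop :=
  G.ConnectedOn Set.univ ∧ ∀ e f : E, G.ConnectedOn ({e, f} : Set E)ᶜ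

/-- `C` is a 2-edge-cut of a 2-edge-connected graph `G`. -/
def TwoEdgeCut (G : MGraph V E) (C : Set E) : Prop :=
  C.ncard = 2 ∧ ¬ G.ConnectedOn Cᶜ

/-- The subgraph of `G` induced on `W` is 2-edge-connected. -/
def InducedTwoEdgeConnected (G : MGraph V E) (W : Set V) : Prop :=
  G.InducedConnected Set.univ W ∧
    ∀ f : E, G.fst f ∈ W → G.snd f ∈ W → G.InducedConnected {f}ᶜ W

end MGraph

/-- capacity function of Algorithm 1. With capacity `(p+1)/p` on
edges of `X` and `1` elsewhere, and assuming every terminal-separating cut has at least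
`p` edges, a terminal-separating cut `δ(S)` has `|δ(S)| = p` and is not fully protected
iff its capacity is `< p+1`; and it has `|δ(S)| > p` or is fully protected iff its
capacity is `≥ p+1`. -/
theorem stmt17 {V E : Type*} [Fintype E] (G : MGraph V E)
    (T : Set (V × V)) (p : ℕ) (hp : 1 ≤ p)
    (X : Set E) (u : E → ℝ)
    (hu1 : ∀ e ∈ X, u e = ((p : ℝ) + 1) / p) (hu2 : ∀ e ∉ X, u e = 1)
    (hinst : ∀ S : Set V, (∃ st ∈ T, MGraph.Separates S st) → p ≤ (G.cut S).ncard)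
    (S : Set V) (hsep : ∃ st ∈ T, MGraph.Separates S st) :
    (((G.cut S).ncard = p ∧ ¬ G.cut S ⊆ X) ↔
      (∑ᶠ e ∈ G.cut S, u e) < (p : ℝ) + 1) ∧
    ((p < (G.cut S).ncard ∨ G.cut S ⊆ X) ↔
      ((p : ℝ) + 1) ≤ ∑ᶠ e ∈ G.cut S, u e) := by
  classical
  set C := G.cut S with hC
  have hfin : C.Finite := Set.toFinite C
  set s : Finset E := hfin.toFinset with hs
  have hcard : C.ncard = s.card := Set.ncard_eq_toFinset_card _ hfin
  set a := (s.filter (· ∈ X)).card with ha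
  set b := (s.filter (· ∉ X)).card with hb
  have hab : s.card = a + b := by
    rw [ha, hb]
    exact (Finset.card_filter_add_card_filter_not (fun e => e ∈ X)).symm
  have hsubiff : C ⊆ X ↔ b = 0 := by
    constructor
    · intro h
      rw [hb, Finset.card_eq_zero, Finset.filter_eq_empty_iff]
      intro e he
      simp only [not_not]
      exact h (hfin.mem_toFinset.mp he)
    · intro h e he
      by_contra hnX
      have : e ∈ s.filter (· ∉ X) := Finset.mem_filter.mpr ⟨hfin.mem_toFinset.mpr he, hnX⟩
      rw [hb, Finset.card_eq_zero] at h
      simp [h] at this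
  have hsum : (∑ᶠ e ∈ C, u e) = (a : ℝ) * (((p : ℝ) + 1) / p) + (b : ℝ) := by
    have hCs : C = (s : Set E) := (Set.Finite.coe_toFinset hfin).symm
    rw [hCs, finsum_mem_coe_finset]
    rw [← Finset.sum_filter_add_sum_filter_not s (· ∈ X)]
    congr 1
    · rw [Finset.sum_congr rfl (fun e he => hu1 e (Finset.mem_filter.mp he).2)]
      simp [ha, mul_comm]
    · rw [Finset.sum_congr rfl (fun e he => hu2 e (Finset.mem_filter.mp he).2)]
      simp [hb]
  have hge : p ≤ a + b := by
    have := hinst S hsep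
    rw [hcard, hab] at this; exact this
  have hppos : (0 : ℝ) < p := by exact_mod_cast hp
  -- key real inequality characterization
  have key : ((p : ℝ) + 1) ≤ (a : ℝ) * (((p : ℝ) + 1) / p) + (b : ℝ) ↔ (p < a + b ∨ b = 0) := by
    have hrw : (a : ℝ) * (((p : ℝ) + 1) / p) + (b : ℝ) = ((a : ℝ) * ((p : ℝ) + 1) + b * p) / p := by
      field_simp
    rw [hrw, le_div_iff₀ hppos]
    constructor
    · intro h
      by_contra hcon
      push_neg at hcon
      obtain ⟨h1, h2⟩ := hcon
      have habp : a + b = p := le_antisymm h1 hge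
      have hb1 : 1 ≤ b := Nat.one_le_iff_ne_zero.mpr h2
      have hap : a + 1 ≤ p := by omega
      have : (a : ℝ) + 1 ≤ p := by exact_mod_cast hap
      have hbr : (a : ℝ) + b = p := by exact_mod_cast habp
      nlinarith
    · intro h
      rcases h with h | h
      · have : (p : ℝ) + 1 ≤ (a : ℝ) + b := by exact_mod_cast h
        nlinarith
      · have hpa : p ≤ a := by omega
        have h1 : (p : ℝ) ≤ a := by exact_mod_cast hpa
        have hb0 : (b : ℝ) = 0 := by exact_mod_cast h
        nlinarith
  have hcard' : (G.cut S).ncard = a + b := by rw [hcard, hab]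
  rw [hcard', hsum, hsubiff]
  constructor
  · rw [← not_le, key]
    push_neg
    constructor
    · rintro ⟨h1, h2⟩
      exact ⟨by omega, h2⟩
    · rintro ⟨h1, h2⟩
      exact ⟨by omega, h2⟩
  · exact key.symm
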